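/- For a unit interval order U with G = inc(U), every directed path in the grid Γ_G is uniquely determined by its weight, and the weight of any path is a product over a strictly increasing chain (with respect to ≻) of elements of U; in particular no two incomparable elements of U can both appear in the weight of a single path. -/

import Mathlib

/-- `nxt n v i` is the least 0-based index `j < n` with `v i + 1 ≤ v j`, or `n`
if none exists (the paper's `next`). -/
noncomputable def nxt (n : ℕ) (v : ℕ → ℝ) (i : ℕ) : ℕ :=
  sInf {j : ℕ | (j < n ∧ v i + 1 ≤ v j) ∨ j = n}

/-- Edge relation of the grid `Γ_G` (0-based rows `0, ..., n`): from `(i, j)`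
with `j < n`, edges to `(i, j+1)` (weight 1) and to `(i+1, nxt j)`
(weight `v_j`). -/
def gstep (n : ℕ) (nxt : ℕ → ℕ) (p q : ℕ × ℕ) : Prop :=
  p.2 < n ∧ (q = (p.1, p.2 + 1) ∨ q = (p.1 + 1, nxt p.2))

/-- The list of rows at which a grid path takes a diagonal step; the weight of
the path is the product of the elements `v_j` over this list. -/
def diagRows (l : List (ℕ × ℕ)) : List ℕ :=
  (l.zip l.tail).filterMap fun p =>
    if p.2.1 = p.1.1 + 1 then some p.1.2 else none

lemma diagRows_nil : diagRows [] = [] := rfl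
lemma diagRows_single (p : ℕ × ℕ) : diagRows [p] = [] := rfl

lemma diagRows_pos {p q : ℕ × ℕ} (l : List (ℕ × ℕ)) (h : q.1 = p.1 + 1) :
    diagRows (p :: q :: l) = p.2 :: diagRows (q :: l) := by
  simp [diagRows, h]

lemma diagRows_neg {p q : ℕ × ℕ} (l : List (ℕ × ℕ)) (h : ¬ q.1 = p.1 + 1) :
    diagRows (p :: q :: l) = diagRows (q :: l) := by
  simp [diagRows, h]

lemma nxt_mem (n : ℕ) (v : ℕ → ℝ) (j : ℕ) :
    (nxt n v j < n ∧ v j + 1 ≤ v (nxt n v j)) ∨ nxt n v j = n :=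
  Nat.sInf_mem (⟨n, Or.inr rfl⟩ : {k : ℕ | (k < n ∧ v j + 1 ≤ v k) ∨ k = n}.Nonempty)

lemma lt_nxt (n : ℕ) (v : ℕ → ℝ)
    (hv : ∀ a b : ℕ, a < b → b < n → v a < v b) {j : ℕ} (hj : j < n) :
    j < nxt n v j := by
  rcases nxt_mem n v j with ⟨hk, hvk⟩ | hk
  · by_contra h
    push_neg at h
    have hle : v (nxt n v j) ≤ v j := by
      rcases lt_or_eq_of_le h with h' | h'
      · exact (hv _ _ h' hj).le
      · rw [h']
    linarith
  · omega

lemma step_col (n : ℕ) (v : ℕ → ℝ)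
    (hv : ∀ a b : ℕ, a < b → b < n → v a < v b) {p q : ℕ × ℕ}
    (h : gstep n (nxt n v) p q) : p.2 < q.2 := by
  obtain ⟨hn, hq | hq⟩ := h
  · rw [hq]; exact Nat.lt_succ_self _
  · rw [hq]; exact lt_nxt n v hv hn

lemma chain_col (n : ℕ) (v : ℕ → ℝ)
    (hv : ∀ a b : ℕ, a < b → b < n → v a < v b) {l : List (ℕ × ℕ)}
    (hl : l.Chain' (gstep n (nxt n v))) :
    l.Pairwise (fun p q => p.2 < q.2) := by
  haveI : IsTrans (ℕ × ℕ) (fun p q : ℕ × ℕ => p.2 < q.2) :=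
    ⟨fun a b c h1 h2 => lt_trans h1 h2⟩
  exact List.isChain_iff_pairwise.mp (hl.imp (fun {a b} h => step_col n v hv h))

lemma mem_diagRows (n : ℕ) (v : ℕ → ℝ) :
    ∀ (l : List (ℕ × ℕ)), l.Chain' (gstep n (nxt n v)) →
      ∀ a ∈ diagRows l, ∃ p ∈ l, p.2 = a ∧ a < n := by
  intro l
  induction l with
  | nil => simp [diagRows_nil]
  | cons p t ih =>
    cases t with
    | nil => simp [diagRows_single]
    | cons q r =>
      intro hl a ha
      obtain ⟨h1, h2⟩ := List.isChain_cons_cons.mp hl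
      by_cases hd : q.1 = p.1 + 1
      · rw [diagRows_pos _ hd] at ha
        rcases List.mem_cons.mp ha with ha | ha
        · exact ⟨p, by simp, ha.symm, ha ▸ h1.1⟩
        · obtain ⟨p', hp', h⟩ := ih h2 a ha
          exact ⟨p', List.mem_cons_of_mem _ hp', h⟩
      · rw [diagRows_neg _ hd] at ha
        obtain ⟨p', hp', h⟩ := ih h2 a ha
        exact ⟨p', List.mem_cons_of_mem _ hp', h⟩

lemma diagRows_lb (n : ℕ) (v : ℕ → ℝ)
    (hv : ∀ a b : ℕ, a < b → b < n → v a < v b) {q : ℕ × ℕ} {r : List (ℕ × ℕ)}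
    (hl : (q :: r).Chain' (gstep n (nxt n v))) :
    ∀ a ∈ diagRows (q :: r), q.2 ≤ a := by
  intro a ha
  obtain ⟨p, hp, hpa, _⟩ := mem_diagRows n v _ hl a ha
  rcases List.mem_cons.mp hp with h | h
  · rw [← hpa, h]
  · have := (List.pairwise_cons.mp (chain_col n v hv hl)).1 p h
    omega

lemma diag_chain (n : ℕ) (v : ℕ → ℝ)
    (hv : ∀ a b : ℕ, a < b → b < n → v a < v b) :
    ∀ (l : List (ℕ × ℕ)), l.Chain' (gstep n (nxt n v)) →
      (diagRows l).Chain' (fun a b => v a + 1 ≤ v b) := by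
  intro l
  induction l with
  | nil => simp [diagRows_nil, List.Chain']
  | cons p t ih =>
    cases t with
    | nil => simp [diagRows_single, List.Chain']
    | cons q r =>
      intro hl
      obtain ⟨h1, h2⟩ := List.isChain_cons_cons.mp hl
      by_cases hd : q.1 = p.1 + 1
      · rw [diagRows_pos _ hd, List.Chain', List.isChain_cons]
        refine ⟨?_, ih h2⟩
        intro b hb
        have hbmem : b ∈ diagRows (q :: r) := List.mem_of_mem_head? hb
        have hqb : q.2 ≤ b := diagRows_lb n v hv h2 b hbmem
        obtain ⟨_, _, _, hbn⟩ := mem_diagRows n v _ h2 b hbmem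
        have hq2 : q.2 = nxt n v p.2 := by
          rcases h1.2 with h | h
          · exfalso; rw [h] at hd; simp at hd
          · rw [h]
        rcases nxt_mem n v p.2 with ⟨hk, hvk⟩ | hk
        · have : v (nxt n v p.2) ≤ v b := by
            rw [hq2] at hqb
            rcases lt_or_eq_of_le hqb with h' | h'
            · exact (hv _ _ h' hbn).le
            · rw [h']
          linarith
        · omega
      · rw [diagRows_neg _ hd]
        exact ih h2

lemma uniq (n : ℕ) (v : ℕ → ℝ)
    (hv : ∀ a b : ℕ, a < b → b < n → v a < v b)
    (l : List (ℕ × ℕ)) :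
    ∀ l' : List (ℕ × ℕ), l.Chain' (gstep n (nxt n v)) → l'.Chain' (gstep n (nxt n v)) →
      l.head? = l'.head? → l.getLast? = l'.getLast? →
      (diagRows l : Multiset ℕ) = (diagRows l' : Multiset ℕ) → l = l' := by
  induction l with
  | nil =>
    intro l' _ _ hh _ _
    cases l' with
    | nil => rfl
    | cons p t => simp at hh
  | cons p t ih =>
    intro l' hl hl' hh hg hm
    cases l' with
    | nil => simp at hh
    | cons p' t' =>
      simp only [List.head?_cons, Option.some.injEq] at hh
      subst hh
      cases t with
      | nil =>
        cases t' with
        | nil => rfl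
        | cons q' r' =>
          exfalso
          rw [List.getLast?_cons_cons] at hg
          have hg' : (q' :: r').getLast? = some p := by
            rw [← hg]; rfl
          have hmem : p ∈ q' :: r' := List.mem_of_mem_getLast? hg'
          have hpw := (List.pairwise_cons.mp (chain_col n v hv hl')).1 _ hmem
          exact lt_irrefl _ hpw
      | cons q r =>
        cases t' with
        | nil =>
          exfalso
          rw [List.getLast?_cons_cons] at hg
          have hg' : (q :: r).getLast? = some p := by
            rw [hg]; rfl
          have hmem : p ∈ q :: r := List.mem_of_mem_getLast? hg'
          have hpw := (List.pairwise_cons.mp (chain_col n v hv hl)).1 _ hmem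
          exact lt_irrefl _ hpw
        | cons q' r' =>
          obtain ⟨h1, h2⟩ := List.isChain_cons_cons.mp hl
          obtain ⟨h1', h2'⟩ := List.isChain_cons_cons.mp hl'
          have hqq : q = q' := by
            rcases h1.2 with hq | hq <;> rcases h1'.2 with hq' | hq'
            · exact hq.trans hq'.symm
            · -- l horizontal, l' diagonal: contradiction
              exfalso
              have hdq : ¬ q.1 = p.1 + 1 := by rw [hq]; simp
              have hdq' : q'.1 = p.1 + 1 := by rw [hq']
              rw [diagRows_neg _ hdq, diagRows_pos _ hdq'] at hm
              have hmemb : p.2 ∈ diagRows (q :: r) := by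
                have : p.2 ∈ (diagRows (q :: r) : Multiset ℕ) := by
                  rw [hm]; simp
                simpa using this
              have := diagRows_lb n v hv h2 _ hmemb
              rw [hq] at this; simp at this
            · exfalso
              have hdq : q.1 = p.1 + 1 := by rw [hq]
              have hdq' : ¬ q'.1 = p.1 + 1 := by rw [hq']; simp
              rw [diagRows_pos _ hdq, diagRows_neg _ hdq'] at hm
              have hmemb : p.2 ∈ diagRows (q' :: r') := by
                have : p.2 ∈ (diagRows (q' :: r') : Multiset ℕ) := by
                  rw [← hm]; simp
                simpa using this
              have := diagRows_lb n v hv h2' _ hmemb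
              rw [hq'] at this; simp at this
            · exact hq.trans hq'.symm
          subst hqq
          have hrest : q :: r = q :: r' := by
            refine ih (q :: r') h2 h2' rfl ?_ ?_
            · rw [List.getLast?_cons_cons, List.getLast?_cons_cons] at hg; exact hg
            · by_cases hd : q.1 = p.1 + 1
              · rw [diagRows_pos _ hd, diagRows_pos _ hd] at hm
                have : (p.2 ::ₘ (diagRows (q :: r) : Multiset ℕ)) =
                    (p.2 ::ₘ (diagRows (q :: r') : Multiset ℕ)) := by
                  simpa using hm
                exact (Multiset.cons_inj_right _).mp this
              · rw [diagRows_neg _ hd, diagRows_neg _ hd] at hm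
                exact hm
          rw [hrest]

/-- in the grid `Γ_G` of a unit interval order
`U = {v 0 < ⋯ < v (n−1)}`, the weight of any directed path is a product over a
strictly `≻`-increasing chain of elements of `U` (in particular no two
incomparable elements both occur in it), and a path is uniquely determined by
its endpoints together with its weight. -/
theorem stmt17 (n : ℕ) (v : ℕ → ℝ)
    (hv : ∀ a b : ℕ, a < b → b < n → v a < v b)
    (l : List (ℕ × ℕ)) (hl : l.Chain' (gstep n (nxt n v))) :
    (diagRows l).Chain' (fun a b => v a + 1 ≤ v b) ∧
    (∀ a ∈ diagRows l, ∀ b ∈ diagRows l, a ≠ b → 1 ≤ |v a - v b|) ∧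
    (∀ l' : List (ℕ × ℕ), l'.Chain' (gstep n (nxt n v)) →
      l.head? = l'.head? → l.getLast? = l'.getLast? →
      (diagRows l : Multiset ℕ) = (diagRows l' : Multiset ℕ) → l = l') := by
  have hc := diag_chain n v hv l hl
  refine ⟨hc, ?_, fun l' h1 h2 h3 h4 => uniq n v hv l l' hl h1 h2 h3 h4⟩
  haveI : IsTrans ℕ (fun a b : ℕ => v a + 1 ≤ v b) :=
    ⟨fun a b c h1 h2 => by linarith⟩
  have hpw := List.isChain_iff_pairwise.mp hc
  have hpw2 : (diagRows l).Pairwise (fun a b => 1 ≤ |v a - v b|) :=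
    hpw.imp (fun {a b} h => by rw [abs_sub_comm]; rw [abs_of_nonneg (by linarith)]; linarith)
  intro a ha b hb hab
  haveI : Std.Symm (fun a b : ℕ => 1 ≤ |v a - v b|) := ⟨fun x y h => by rwa [abs_sub_comm]⟩
  exact hpw2.forall ha hb hab
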